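/- arXiv:1805.08981 — 3 statements merged into one kernel-verified Lean document; each statement's English description precedes it below -/
import Mathlib

section
/- Let H be a real inner product space, W a real vector space, and B : (H × W) → (H × W) → ℝ a symmetric bilinear form. Let λ, λ_h ∈ ℝ and let (u,p), (u_h,p_h) ∈ H × W with u_h ≠ 0. Assume B((u,p),(u,p)) = λ‖u‖², B((u,p),(u_h,p_h)) = λ⟨u,u_h⟩, and in addition the discrete eigenvalue relation B((u_h,p_h),(u_h,p_h)) = λ_h‖u_h‖². Then λ_h − λ = ( B((u−u_h, p−p_h),(u−u_h, p−p_h)) − λ‖u−u_h‖² ) / ‖u_h‖². -/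
open scoped RealInnerProductSpace

/-- Eigenvalue error representation from the Rayleigh quotient identity. -/
theorem eigenvalue_error_representation
    {H : Type*} [NormedAddCommGroup H] [InnerProductSpace ℝ H]
    {W : Type*} [AddCommGroup W] [Module ℝ W]
    (B : (H × W) →ₗ[ℝ] (H × W) →ₗ[ℝ] ℝ)
    (hBsymm : ∀ x y : H × W, B x y = B y x)
    (lam lam_h : ℝ) (u u_h : H) (p p_h : W)
    (hu_h : u_h ≠ 0)
    (hcont : B (u, p) (u, p) = lam * ‖u‖ ^ 2)
    (hconsist : B (u, p) (u_h, p_h) = lam * ⟪u, u_h⟫)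
    (hdisc : B (u_h, p_h) (u_h, p_h) = lam_h * ‖u_h‖ ^ 2) :
    lam_h - lam =
      (B (u - u_h, p - p_h) (u - u_h, p - p_h) - lam * ‖u - u_h‖ ^ 2) / ‖u_h‖ ^ 2 := by
  have hn : ‖u_h‖ ^ 2 ≠ 0 := pow_ne_zero _ (norm_ne_zero_iff.mpr hu_h)
  have hsub : ((u - u_h, p - p_h) : H × W) = (u, p) - (u_h, p_h) := rfl
  have hB : B (u - u_h, p - p_h) (u - u_h, p - p_h)
      = B (u, p) (u, p) - 2 * B (u, p) (u_h, p_h) + B (u_h, p_h) (u_h, p_h) := by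
    rw [hsub]
    simp only [map_sub, LinearMap.sub_apply]
    rw [hBsymm (u_h, p_h) (u, p)]
    ring
  have hnorm : ‖u - u_h‖ ^ 2 = ‖u‖ ^ 2 - 2 * ⟪u, u_h⟫ + ‖u_h‖ ^ 2 := by
    rw [← real_inner_self_eq_norm_sq, ← real_inner_self_eq_norm_sq,
      ← real_inner_self_eq_norm_sq, inner_sub_sub_self]
    rw [real_inner_comm u_h u]; ring
  rw [hB, hcont, hconsist, hdisc, hnorm]
  field_simp
  ring
end

section
/- Let X and Y be real normed spaces, let ν > 0, C > 0, C_Ω > 0 be real numbers, and let A : (X × Y) → (X × Y) → ℝ be a bilinear form. Fix (u,p) ∈ X × Y and assume: (i) A((u,p),(u,−p)) ≥ ‖u‖_X²; (ii) there exists w ∈ X with ‖w‖_X ≤ ν^{−1/2}‖p‖_Y and A((u,p),(w,0)) ≥ C_Ω ν^{−1}‖p‖_Y² − C‖u‖_X‖w‖_X. Then there exists a pair (v,q) ∈ X × Y such that A((u,p),(v,q)) ≥ min{1/2, C_Ω²/(8C²)} · (‖u‖_X² + ν^{−1}‖p‖_Y²) and ‖v‖_X² + ν^{−1}‖q‖_Y²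 ≤ max{2, 1 + C_Ω²/(8C⁴)} · (‖u‖_X² + ν^{−1}‖p‖_Y²); indeed one may take v = u + (C_Ω/(4C²)) w and q = −p. -/
set_option maxHeartbeats 1000000 in
/-- Abstract stability property (Lemma 4.1). -/
theorem dg_stability
    {X : Type*} [NormedAddCommGroup X] [NormedSpace ℝ X]
    {Y : Type*} [NormedAddCommGroup Y] [NormedSpace ℝ Y]
    (ν C C_Ω : ℝ) (hν : 0 < ν) (hC : 0 < C) (hCΩ : 0 < C_Ω)
    (A : (X × Y) →ₗ[ℝ] (X × Y) →ₗ[ℝ] ℝ)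
    (u : X) (p : Y)
    (hcoer : A (u, p) (u, -p) ≥ ‖u‖ ^ 2)
    (hw : ∃ w : X, ‖w‖ ≤ (Real.sqrt ν)⁻¹ * ‖p‖ ∧
      A (u, p) (w, 0) ≥ C_Ω * ν⁻¹ * ‖p‖ ^ 2 - C * ‖u‖ * ‖w‖) :
    ∃ (v : X) (q : Y),
      A (u, p) (v, q) ≥
        min (1 / 2) (C_Ω ^ 2 / (8 * C ^ 2)) * (‖u‖ ^ 2 + ν⁻¹ * ‖p‖ ^ 2) ∧
      ‖v‖ ^ 2 + ν⁻¹ * ‖q‖ ^ 2 ≤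
        max 2 (1 + C_Ω ^ 2 / (8 * C ^ 4)) * (‖u‖ ^ 2 + ν⁻¹ * ‖p‖ ^ 2) ∧
      (∃ w : X, ‖w‖ ≤ (Real.sqrt ν)⁻¹ * ‖p‖ ∧
        A (u, p) (w, 0) ≥ C_Ω * ν⁻¹ * ‖p‖ ^ 2 - C * ‖u‖ * ‖w‖ ∧
        v = u + (C_Ω / (4 * C ^ 2)) • w ∧ q = -p) := by
  obtain ⟨w, hw1, hw2⟩ := hw
  set δ : ℝ := C_Ω / (4 * C ^ 2) with hδ
  have hδpos : 0 < δ := by positivity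
  set x : ℝ := ‖u‖ with hx
  set y : ℝ := (Real.sqrt ν)⁻¹ * ‖p‖ with hy
  have hy0 : 0 ≤ y := by positivity
  have hy2 : y ^ 2 = ν⁻¹ * ‖p‖ ^ 2 := by
    rw [hy, mul_pow, ← Real.sqrt_inv, Real.sq_sqrt (by positivity)]
  have hx0 : 0 ≤ x := norm_nonneg u
  have hw0 : 0 ≤ ‖w‖ := norm_nonneg w
  have key : (A (u, p)) (u + δ • w, -p) = A (u, p) (u, -p) + δ * A (u, p) (w, 0) := by
    have h : ((u + δ • w, -p) : X × Y) = (u, -p) + δ • (w, (0 : Y)) := by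
      ext <;> simp
    rw [h, map_add, map_smul]
    rfl
  refine ⟨u + δ • w, -p, ?_, ?_, w, hw1, hw2, rfl, rfl⟩
  · rw [key]
    set K : ℝ := C_Ω ^ 2 / (32 * C ^ 2) with hK
    have hK0 : 0 < K := by positivity
    have h8K : δ * C_Ω = 8 * K := by rw [hδ, hK]; field_simp; ring
    have h2K : (δ * C) ^ 2 = 2 * K := by rw [hδ, hK]; field_simp; ring
    have hmin1 : min (1 / 2) (C_Ω ^ 2 / (8 * C ^ 2)) ≤ 1 / 2 := min_le_left _ _
    have hmin2 : min (1 / 2) (C_Ω ^ 2 / (8 * C ^ 2)) ≤ 4 * K := by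
      have : C_Ω ^ 2 / (8 * C ^ 2) = 4 * K := by rw [hK]; field_simp; ring
      rw [← this]; exact min_le_right _ _
    have h2 : A (u, p) (w, 0) ≥ C_Ω * y ^ 2 - C * x * ‖w‖ := by
      rw [hy2]; linarith [hw2]
    have hδC : 0 < δ * C := by positivity
    have hxw : x * ‖w‖ ≤ x * y := mul_le_mul_of_nonneg_left hw1 hx0
    have hsq : (δ * C) * (x * y) ≤ x ^ 2 / 2 + K * y ^ 2 := by
      nlinarith [sq_nonneg (x - (δ * C) * y)]
    have hAw : δ * A (u, p) (w, 0) ≥ 8 * K * y ^ 2 - (δ * C) * (x * ‖w‖) := by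
      have := mul_le_mul_of_nonneg_left h2 hδpos.le
      nlinarith [this]
    have hcxy : (δ * C) * (x * ‖w‖) ≤ (δ * C) * (x * y) :=
      mul_le_mul_of_nonneg_left hxw hδC.le
    rw [← hy2]
    have hKy : 0 ≤ K * y ^ 2 := by positivity
    linarith [mul_le_mul_of_nonneg_right hmin1 (sq_nonneg x),
      mul_le_mul_of_nonneg_right hmin2 (sq_nonneg y)]
  · have hvn : ‖u + δ • w‖ ≤ x + δ * ‖w‖ := by
      calc ‖u + δ • w‖ ≤ ‖u‖ + ‖δ • w‖ := norm_add_le _ _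
        _ = x + δ * ‖w‖ := by rw [norm_smul, Real.norm_of_nonneg hδpos.le]
    have hv2 : ‖u + δ • w‖ ^ 2 ≤ 2 * x ^ 2 + 2 * δ ^ 2 * y ^ 2 := by
      have h1 : ‖u + δ • w‖ ^ 2 ≤ (x + δ * ‖w‖) ^ 2 := by
        apply pow_le_pow_left₀ (norm_nonneg _) hvn
      have hww : ‖w‖ ^ 2 ≤ y ^ 2 := pow_le_pow_left₀ hw0 hw1 2
      nlinarith [sq_nonneg (x - δ * ‖w‖),
        mul_le_mul_of_nonneg_left hww (sq_nonneg δ)]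
    have hM : 2 * δ ^ 2 = C_Ω ^ 2 / (8 * C ^ 4) := by rw [hδ]; field_simp; ring
    have hq : ‖(-p : Y)‖ = ‖p‖ := norm_neg p
    rw [hq]
    have hmax1 : (2 : ℝ) ≤ max 2 (1 + C_Ω ^ 2 / (8 * C ^ 4)) := le_max_left _ _
    have hmax2 : 1 + C_Ω ^ 2 / (8 * C ^ 4) ≤ max 2 (1 + C_Ω ^ 2 / (8 * C ^ 4)) :=
      le_max_right _ _
    have hyp2 : 0 ≤ ν⁻¹ * ‖p‖ ^ 2 := by positivity
    rw [← hy2]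
    linarith [mul_le_mul_of_nonneg_right hmax1 (sq_nonneg x),
      mul_le_mul_of_nonneg_right hmax2 (sq_nonneg y), hv2, hM,
      mul_le_mul_of_nonneg_right hM.le (sq_nonneg y)]
end

section
/- Let X and Y be real normed spaces, let ν > 0, C > 0, C_Ω > 0 be real numbers, and let A : (X × Y) → (X × Y) → ℝ be a bilinear form. Fix (u,p) ∈ X × Y and assume: (i) A((u,p),(u,−p)) ≥ ‖u‖_X²; (ii) w ∈ X satisfies ‖w‖_X ≤ ν^{−1/2}‖p‖_Y and A((u,p),(w,0)) ≥ C_Ω ν^{−1}‖p‖_Y² − C‖u‖_X‖w‖_X. Then, with δ = C_Ω/(4C²), the coercivity bound A((u,p),(u + δw, −p)) ≥ min{1/2, C_Ω²/(8C²)} · (‖u‖_X² + ν^{−1}‖p‖_Y²) holds. -/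
/-- Coercivity estimate (infsup11) in the proof of Lemma 4.1. -/
theorem dg_stability_coercivity
    {X : Type*} [NormedAddCommGroup X] [NormedSpace ℝ X]
    {Y : Type*} [NormedAddCommGroup Y] [NormedSpace ℝ Y]
    (ν C C_Ω : ℝ) (hν : 0 < ν) (hC : 0 < C) (hCΩ : 0 < C_Ω)
    (A : (X × Y) →ₗ[ℝ] (X × Y) →ₗ[ℝ] ℝ)
    (u : X) (p : Y) (w : X)
    (hcoer : A (u, p) (u, -p) ≥ ‖u‖ ^ 2)
    (hwnorm : ‖w‖ ≤ (Real.sqrt ν)⁻¹ * ‖p‖)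
    (hwinfsup : A (u, p) (w, 0) ≥ C_Ω * ν⁻¹ * ‖p‖ ^ 2 - C * ‖u‖ * ‖w‖) :
    A (u, p) (u + (C_Ω / (4 * C ^ 2)) • w, -p) ≥
      min (1 / 2) (C_Ω ^ 2 / (8 * C ^ 2)) * (‖u‖ ^ 2 + ν⁻¹ * ‖p‖ ^ 2) := by
  set δ : ℝ := C_Ω / (4 * C ^ 2) with hδdef
  have hδ : 0 < δ := by positivity
  have hsplit : ((u + δ • w, -p) : X × Y) = (u, -p) + δ • (w, 0) := by
    simp [Prod.ext_iff]
  have hA : A (u, p) (u + δ • w, -p) = A (u, p) (u, -p) + δ * A (u, p) (w, 0) := by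
    rw [hsplit, map_add, map_smul]; simp
  have hs2 : ((Real.sqrt ν)⁻¹) ^ 2 = ν⁻¹ := by
    rw [← Real.sqrt_inv]; exact Real.sq_sqrt (by positivity)
  set a := ‖u‖
  set b := ‖p‖
  set s := (Real.sqrt ν)⁻¹
  have ha : 0 ≤ a := norm_nonneg u
  have hb : 0 ≤ b := norm_nonneg p
  have hwn : 0 ≤ ‖w‖ := norm_nonneg w
  have hs : 0 ≤ s := by positivity
  have hprod : C * a * ‖w‖ ≤ C * a * (s * b) := by
    apply mul_le_mul_of_nonneg_left hwnorm (by positivity)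
  have hyoung : C * a * (s * b) ≤ C ^ 2 / (2 * C_Ω) * a ^ 2 + C_Ω / 2 * (s ^ 2 * b ^ 2) := by
    have h := sq_nonneg (C * a - C_Ω * (s * b))
    have hCΩ' : 0 < 2 * C_Ω := by linarith
    rw [div_mul_eq_mul_div, div_add' _ _ _ (ne_of_gt hCΩ'), le_div_iff₀ hCΩ']
    nlinarith [sq_nonneg (C * a - C_Ω * (s * b))]
  have hlb : A (u, p) (u + δ • w, -p) ≥
      a ^ 2 + δ * (C_Ω * ν⁻¹ * b ^ 2 - C * a * ‖w‖) := by
    rw [hA]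
    have := mul_le_mul_of_nonneg_left hwinfsup (le_of_lt hδ)
    linarith
  have hkey : a ^ 2 + δ * (C_Ω * ν⁻¹ * b ^ 2 - C * a * ‖w‖) ≥
      min (1 / 2) (C_Ω ^ 2 / (8 * C ^ 2)) * (a ^ 2 + ν⁻¹ * b ^ 2) := by
    have hm1 : min (1 / 2) (C_Ω ^ 2 / (8 * C ^ 2)) ≤ 1 / 2 := min_le_left _ _
    have hm2 : min (1 / 2) (C_Ω ^ 2 / (8 * C ^ 2)) ≤ C_Ω ^ 2 / (8 * C ^ 2) := min_le_right _ _
    have hc1 : δ * (C * a * ‖w‖) ≤ δ * (C ^ 2 / (2 * C_Ω) * a ^ 2 + C_Ω / 2 * (s ^ 2 * b ^ 2)) := by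
      apply mul_le_mul_of_nonneg_left (le_trans hprod hyoung) (le_of_lt hδ)
    have hδC : δ * (C ^ 2 / (2 * C_Ω)) = 1 / 8 := by
      field_simp [hδdef]; rw [hδdef, div_mul_eq_mul_div, div_mul_eq_mul_div, div_eq_iff (by positivity)]; ring
    have hδCΩ : δ * (C_Ω / 2) = C_Ω ^ 2 / (8 * C ^ 2) := by
      field_simp [hδdef]; rw [hδdef, div_mul_eq_mul_div, div_mul_eq_mul_div, div_eq_iff (by positivity)]; ring
    have hν' : 0 ≤ ν⁻¹ := by positivity
    have hc2 : δ * (C * a * ‖w‖) ≤ 1 / 8 * a ^ 2 + C_Ω ^ 2 / (8 * C ^ 2) * (ν⁻¹ * b ^ 2) := by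
      calc δ * (C * a * ‖w‖) ≤ δ * (C ^ 2 / (2 * C_Ω) * a ^ 2 + C_Ω / 2 * (s ^ 2 * b ^ 2)) := hc1
        _ = δ * (C ^ 2 / (2 * C_Ω)) * a ^ 2 + δ * (C_Ω / 2) * (ν⁻¹ * b ^ 2) := by
            rw [hs2]; ring
        _ = 1 / 8 * a ^ 2 + C_Ω ^ 2 / (8 * C ^ 2) * (ν⁻¹ * b ^ 2) := by rw [hδC, hδCΩ]
    have hδCΩ2 : δ * C_Ω = 2 * (C_Ω ^ 2 / (8 * C ^ 2)) := by
      field_simp [hδdef]; rw [hδdef, div_mul_eq_mul_div, div_mul_eq_mul_div, div_eq_iff (by positivity)]; ring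
    have p1 := mul_le_mul_of_nonneg_right hm1 (sq_nonneg a)
    have p2 := mul_le_mul_of_nonneg_right hm2 (mul_nonneg hν' (sq_nonneg b))
    have hexp : min (1 / 2) (C_Ω ^ 2 / (8 * C ^ 2)) * (a ^ 2 + ν⁻¹ * b ^ 2)
        = min (1 / 2) (C_Ω ^ 2 / (8 * C ^ 2)) * a ^ 2
          + min (1 / 2) (C_Ω ^ 2 / (8 * C ^ 2)) * (ν⁻¹ * b ^ 2) := by ring
    have hexp2 : a ^ 2 + δ * (C_Ω * ν⁻¹ * b ^ 2 - C * a * ‖w‖)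
        = a ^ 2 + δ * C_Ω * (ν⁻¹ * b ^ 2) - δ * (C * a * ‖w‖) := by ring
    have hexp3 : δ * C_Ω * (ν⁻¹ * b ^ 2) = 2 * (C_Ω ^ 2 / (8 * C ^ 2)) * (ν⁻¹ * b ^ 2) := by
      rw [hδCΩ2]
    have hq := mul_nonneg hν' (sq_nonneg b)
    rw [hexp, hexp2, hexp3]
    linarith [p1, p2, hc2, sq_nonneg a]
  linarith
end
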